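/- sup over γ ∈ (0,1) of G₁⁻¹(1−γ)/H_{1,λ}⁻¹(1−γ) equals (2/λ) Γ²((λ+1)/2)/Γ²(λ/2), where G₁ is the Chi-squared(1) CDF and H_{1,λ} is the F(1,λ) CDF. -/

import Mathlib

open MeasureTheory Real Set

/-- Chi-squared(1) density. -/
noncomputable def chi1Pdf (u : ℝ) : ℝ :=
  if 0 < u then (Real.sqrt (2 * Real.pi * u))⁻¹ * Real.exp (-u / 2) else 0

/-- Chi-squared(1) CDF `G₁`. -/
noncomputable def G1 (x : ℝ) : ℝ := ∫ u in Set.Iic x, chi1Pdf u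

/-- `F(1, λ)` density. -/
noncomputable def fPdf (l x : ℝ) : ℝ :=
  if 0 < x then
    (Real.Gamma ((1 + l) / 2) / (Real.Gamma (1 / 2) * Real.Gamma (l / 2))) *
      (1 / l) ^ ((1 : ℝ) / 2) * x ^ (-(1 / 2 : ℝ)) * (1 + x / l) ^ (-((1 + l) / 2))
  else 0

/-- `F(1, λ)` CDF `H_{1,λ}`. -/
noncomputable def H1 (l x : ℝ) : ℝ := ∫ u in Set.Iic x, fPdf l u

/-- Quantile function (generalized inverse) of a CDF. -/
noncomputable def qtl (F : ℝ → ℝ) (p : ℝ) : ℝ := sInf {x : ℝ | p ≤ F x}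



open Filter

noncomputable def cF (l : ℝ) : ℝ :=
  Real.Gamma ((1 + l) / 2) / (Real.Gamma (1 / 2) * Real.Gamma (l / 2)) * (1 / l) ^ ((1 : ℝ) / 2)

noncomputable def KK (l : ℝ) : ℝ := (2 / l) * Real.Gamma ((l + 1) / 2) ^ 2 / Real.Gamma (l / 2) ^ 2

lemma cF_pos {l : ℝ} (hl : 0 < l) : 0 < cF l := by
  have h1 : 0 < Real.Gamma ((1 + l) / 2) := Real.Gamma_pos_of_pos (by linarith)
  have h2 : 0 < Real.Gamma (1 / 2) := Real.Gamma_pos_of_pos (by norm_num)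
  have h3 : 0 < Real.Gamma (l / 2) := Real.Gamma_pos_of_pos (by linarith)
  have h4 : (0:ℝ) < (1 / l) ^ ((1 : ℝ) / 2) := Real.rpow_pos_of_pos (by positivity) _
  unfold cF; positivity

lemma KK_pos {l : ℝ} (hl : 0 < l) : 0 < KK l := by
  have h1 : 0 < Real.Gamma ((l + 1) / 2) := Real.Gamma_pos_of_pos (by linarith)
  have h3 : 0 < Real.Gamma (l / 2) := Real.Gamma_pos_of_pos (by linarith)
  unfold KK; positivity

lemma KK_eq {l : ℝ} (hl : 0 < l) : KK l = 2 * Real.pi * (cF l) ^ 2 := by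
  have h3 : 0 < Real.Gamma (l / 2) := Real.Gamma_pos_of_pos (by linarith)
  have hhalf : Real.Gamma (1 / 2) = Real.sqrt Real.pi := Real.Gamma_one_half_eq
  have hsq : Real.sqrt Real.pi ^ 2 = Real.pi := Real.sq_sqrt Real.pi_pos.le
  have hl2 : ((1/l : ℝ) ^ ((1:ℝ)/2)) ^ 2 = 1/l := by
    rw [← Real.rpow_natCast ((1/l : ℝ) ^ ((1:ℝ)/2)) 2, ← Real.rpow_mul (by positivity)]
    norm_num
  have hcomm : (1 + l) / 2 = (l + 1) / 2 := by ring
  unfold KK cF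
  rw [show (1 + l) / 2 = (l + 1) / 2 by ring, hhalf, mul_pow, div_pow, hl2, mul_pow, hsq]
  have hπ : Real.pi ≠ 0 := Real.pi_ne_zero
  field_simp

lemma chi1Pdf_nonneg (u : ℝ) : 0 ≤ chi1Pdf u := by
  unfold chi1Pdf; split_ifs with h
  · positivity
  · exact le_refl 0

lemma chi1Pdf_of_nonpos {u : ℝ} (hu : u ≤ 0) : chi1Pdf u = 0 := by
  unfold chi1Pdf; rw [if_neg (not_lt.mpr hu)]

lemma chi1Pdf_eq {u : ℝ} (hu : 0 < u) :
    chi1Pdf u = (2 * Real.pi) ^ (-(1/2 : ℝ)) * (u ^ (-(1/2 : ℝ)) * Real.exp (-(1/2 * u))) := by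
  unfold chi1Pdf
  rw [if_pos hu, Real.sqrt_mul (by positivity) u, mul_inv,
    Real.sqrt_eq_rpow, Real.sqrt_eq_rpow, ← Real.rpow_neg (by positivity),
    ← Real.rpow_neg hu.le]
  rw [show -u / 2 = -(1/2 * u) by ring]
  ring

lemma chi1Pdf_pos {u : ℝ} (hu : 0 < u) : 0 < chi1Pdf u := by
  unfold chi1Pdf; rw [if_pos hu]
  have : (0:ℝ) < Real.sqrt (2 * Real.pi * u) := Real.sqrt_pos.mpr (by positivity)
  positivity

lemma measurable_chi1Pdf : Measurable chi1Pdf := by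
  unfold chi1Pdf
  refine Measurable.ite measurableSet_Ioi ?_ measurable_const
  fun_prop
lemma integrableOn_chi1Pdf_Ioi : IntegrableOn chi1Pdf (Ioi (0:ℝ)) := by
  have h1 : IntegrableOn chi1Pdf (Ioc (0:ℝ) 1) := by
    have hbound : IntegrableOn (fun u : ℝ => (2 * Real.pi) ^ (-(1/2 : ℝ)) * u ^ (-(1/2 : ℝ)))
        (Ioc (0:ℝ) 1) := by
      exact ((intervalIntegral.intervalIntegrable_rpow' (by norm_num)).1).const_mul _
    refine hbound.integrable.mono' measurable_chi1Pdf.aestronglyMeasurable.restrict ?_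
    refine (ae_restrict_iff' measurableSet_Ioc).mpr (ae_of_all _ fun u hu => ?_)
    rw [Real.norm_of_nonneg (chi1Pdf_nonneg u), chi1Pdf_eq hu.1]
    have h1 : Real.exp (-(1/2 * u)) ≤ 1 := Real.exp_le_one_iff.mpr (by nlinarith [hu.1])
    have h2 : (0:ℝ) < u ^ (-(1/2 : ℝ)) := Real.rpow_pos_of_pos hu.1 _
    have h3 : (0:ℝ) < (2 * Real.pi) ^ (-(1/2 : ℝ)) := Real.rpow_pos_of_pos (by positivity) _
    exact mul_le_mul_of_nonneg_left (mul_le_of_le_one_right h2.le h1) h3.le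
  have h2 : IntegrableOn chi1Pdf (Ioi (1:ℝ)) := by
    have hbound : IntegrableOn (fun u : ℝ => (2 * Real.pi) ^ (-(1/2 : ℝ)) * Real.exp (-(1/2) * u))
        (Ioi (1:ℝ)) := (exp_neg_integrableOn_Ioi 1 (by norm_num)).const_mul _
    refine hbound.integrable.mono' measurable_chi1Pdf.aestronglyMeasurable.restrict ?_
    refine (ae_restrict_iff' measurableSet_Ioi).mpr (ae_of_all _ fun u hu => ?_)
    have hu0 : (0:ℝ) < u := lt_trans one_pos hu
    rw [Real.norm_of_nonneg (chi1Pdf_nonneg u), chi1Pdf_eq hu0]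
    have h1 : u ^ (-(1/2 : ℝ)) ≤ 1 := by
      rw [← Real.rpow_zero u]
      exact Real.rpow_le_rpow_of_exponent_le (le_of_lt hu) (by norm_num)
    have h2 : (0:ℝ) < Real.exp (-(1/2 * u)) := Real.exp_pos _
    have h3 : (0:ℝ) < (2 * Real.pi) ^ (-(1/2 : ℝ)) := Real.rpow_pos_of_pos (by positivity) _
    rw [show -(1/2:ℝ) * u = -(1/2 * u) by ring]
    exact mul_le_mul_of_nonneg_left (mul_le_of_le_one_left h2.le h1) h3.le
  have : Ioi (0:ℝ) = Ioc 0 1 ∪ Ioi 1 := (Set.Ioc_union_Ioi_eq_Ioi (by norm_num)).symm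
  rw [this]
  exact h1.union h2

lemma integrable_chi1Pdf : Integrable chi1Pdf := by
  rw [← integrableOn_univ, (Set.Iic_union_Ioi (a := (0:ℝ))).symm]
  refine IntegrableOn.union ?_ integrableOn_chi1Pdf_Ioi
  refine (integrableOn_congr_fun (fun x (hx : x ∈ Iic (0:ℝ)) => chi1Pdf_of_nonpos hx)
    measurableSet_Iic).mpr integrableOn_zero

lemma integral_Ioi_chi1Pdf : ∫ u in Ioi (0:ℝ), chi1Pdf u = 1 := by
  rw [setIntegral_congr_fun measurableSet_Ioi (fun u hu => chi1Pdf_eq hu)]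
  rw [integral_const_mul]
  have := integral_rpow_mul_exp_neg_mul_Ioi (a := 1/2) (r := 1/2) (by norm_num) (by norm_num)
  rw [show (1/2 : ℝ) - 1 = -(1/2) by norm_num] at this
  rw [this]
  have h2 : ((1:ℝ) / (1/2)) = 2 := by norm_num
  rw [h2, Real.Gamma_one_half_eq, Real.rpow_neg (by positivity),
    Real.mul_rpow (by norm_num) Real.pi_pos.le, ← Real.sqrt_eq_rpow, ← Real.sqrt_eq_rpow]
  have hs2 : (0:ℝ) < Real.sqrt 2 := Real.sqrt_pos.mpr (by norm_num)
  have hsp : (0:ℝ) < Real.sqrt Real.pi := Real.sqrt_pos.mpr Real.pi_pos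
  field_simp

lemma integral_chi1Pdf : ∫ u, chi1Pdf u = 1 := by
  have h := integral_add_compl (measurableSet_Iic (a := (0:ℝ))) integrable_chi1Pdf
  rw [compl_Iic] at h
  have h0 : ∫ u in Iic (0:ℝ), chi1Pdf u = 0 := by
    rw [setIntegral_congr_fun measurableSet_Iic
      (fun x (hx : x ∈ Iic (0:ℝ)) => chi1Pdf_of_nonpos hx)]
    exact integral_zero _ _
  rw [← h, h0, integral_Ioi_chi1Pdf]
  norm_num
lemma fPdf_eq' {l x : ℝ} (hx : 0 < x) :
    fPdf l x = cF l * (x ^ (-(1/2 : ℝ)) * (1 + x / l) ^ (-((1 + l) / 2))) := by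
  unfold fPdf cF; rw [if_pos hx]; ring

lemma fPdf_nonneg {l : ℝ} (hl : 0 < l) (x : ℝ) : 0 ≤ fPdf l x := by
  rcases le_or_gt x 0 with hx | hx
  · unfold fPdf; rw [if_neg (not_lt.mpr hx)]
  · rw [fPdf_eq' hx]
    have h1 : (0:ℝ) ≤ x ^ (-(1/2 : ℝ)) := Real.rpow_nonneg hx.le _
    have h2 : (0:ℝ) ≤ (1 + x / l) ^ (-((1 + l) / 2)) := Real.rpow_nonneg (by positivity) _
    exact mul_nonneg (cF_pos hl).le (mul_nonneg h1 h2)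

lemma fPdf_of_nonpos {l x : ℝ} (hx : x ≤ 0) : fPdf l x = 0 := by
  unfold fPdf; rw [if_neg (not_lt.mpr hx)]

lemma fPdf_eq {l x : ℝ} (hx : 0 < x) :
    fPdf l x = cF l * (x ^ (-(1/2 : ℝ)) * (1 + x / l) ^ (-((1 + l) / 2))) := fPdf_eq' hx

lemma fPdf_pos {l x : ℝ} (hl : 0 < l) (hx : 0 < x) : 0 < fPdf l x := by
  rw [fPdf_eq hx]
  have h1 : (0:ℝ) < x ^ (-(1/2 : ℝ)) := Real.rpow_pos_of_pos hx _
  have h2 : (0:ℝ) < (1 + x / l) ^ (-((1 + l) / 2)) := Real.rpow_pos_of_pos (by positivity) _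
  exact mul_pos (cF_pos hl) (mul_pos h1 h2)

lemma measurable_fPdf (l : ℝ) : Measurable (fPdf l) := by
  unfold fPdf
  refine Measurable.ite measurableSet_Ioi ?_ measurable_const
  fun_prop

lemma one_add_rpow_le_one {l x : ℝ} (hl : 0 < l) (hx : 0 ≤ x) :
    (1 + x / l) ^ (-((1 + l) / 2)) ≤ 1 := by
  have h := div_nonneg hx hl.le
  exact Real.rpow_le_one_of_one_le_of_nonpos (by linarith) (by linarith)

lemma integrableOn_fPdf_Ioi {l : ℝ} (hl : 0 < l) : IntegrableOn (fPdf l) (Ioi (0:ℝ)) := by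
  have h1 : IntegrableOn (fPdf l) (Ioc (0:ℝ) 1) := by
    have hbound : IntegrableOn (fun u : ℝ => cF l * u ^ (-(1/2 : ℝ))) (Ioc (0:ℝ) 1) :=
      ((intervalIntegral.intervalIntegrable_rpow' (by norm_num)).1).const_mul _
    refine hbound.integrable.mono' (measurable_fPdf l).aestronglyMeasurable.restrict ?_
    refine (ae_restrict_iff' measurableSet_Ioc).mpr (ae_of_all _ fun u hu => ?_)
    rw [Real.norm_of_nonneg (fPdf_nonneg hl u), fPdf_eq hu.1]
    have h2 : (0:ℝ) < u ^ (-(1/2 : ℝ)) := Real.rpow_pos_of_pos hu.1 _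
    exact mul_le_mul_of_nonneg_left
      (mul_le_of_le_one_right h2.le (one_add_rpow_le_one hl hu.1.le)) (cF_pos hl).le
  have h2 : IntegrableOn (fPdf l) (Ioi (1:ℝ)) := by
    have hexp : -(1/2 : ℝ) + -((1 + l)/2) < -1 := by linarith
    have hbound : IntegrableOn
        (fun u : ℝ => (cF l * l ^ ((1 + l)/2)) * u ^ (-(1/2 : ℝ) + -((1 + l)/2)))
        (Ioi (1:ℝ)) := (integrableOn_Ioi_rpow_of_lt hexp one_pos).const_mul _
    refine hbound.integrable.mono' (measurable_fPdf l).aestronglyMeasurable.restrict ?_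
    refine (ae_restrict_iff' measurableSet_Ioi).mpr (ae_of_all _ fun u hu => ?_)
    have hu0 : (0:ℝ) < u := lt_trans one_pos hu
    rw [Real.norm_of_nonneg (fPdf_nonneg hl u), fPdf_eq hu0]
    have key : (1 + u / l) ^ (-((1 + l) / 2)) ≤ (u / l) ^ (-((1 + l) / 2)) := by
      have h := div_nonneg (le_of_lt hu0) hl.le
      exact Real.rpow_le_rpow_of_nonpos (by positivity) (by linarith) (by linarith)
    have hinv : (l⁻¹ : ℝ) ^ (-((1 + l)/2)) = l ^ ((1 + l)/2) := by
      rw [Real.inv_rpow hl.le, Real.rpow_neg hl.le, inv_inv]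
    have hul : (u / l) ^ (-((1 + l) / 2)) = l ^ ((1 + l)/2) * u ^ (-((1 + l)/2)) := by
      rw [div_eq_mul_inv, Real.mul_rpow hu0.le (inv_nonneg.mpr hl.le), hinv, mul_comm]
    rw [Real.rpow_add hu0]
    have h2 : (0:ℝ) ≤ u ^ (-(1/2 : ℝ)) := Real.rpow_nonneg hu0.le _
    calc cF l * (u ^ (-(1/2 : ℝ)) * (1 + u / l) ^ (-((1 + l) / 2)))
        ≤ cF l * (u ^ (-(1/2 : ℝ)) * (l ^ ((1 + l)/2) * u ^ (-((1 + l)/2)))) := by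
          refine mul_le_mul_of_nonneg_left (mul_le_mul_of_nonneg_left ?_ h2) (cF_pos hl).le
          rw [← hul]; exact key
      _ = cF l * l ^ ((1 + l)/2) * (u ^ (-(1/2:ℝ)) * u ^ (-((1 + l) / 2))) := by ring
  have : Ioi (0:ℝ) = Ioc 0 1 ∪ Ioi 1 := (Set.Ioc_union_Ioi_eq_Ioi (by norm_num)).symm
  rw [this]
  exact h1.union h2

lemma integrable_fPdf {l : ℝ} (hl : 0 < l) : Integrable (fPdf l) := by
  rw [← integrableOn_univ, (Set.Iic_union_Ioi (a := (0:ℝ))).symm]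
  refine IntegrableOn.union ?_ (integrableOn_fPdf_Ioi hl)
  exact (integrableOn_congr_fun (fun x (hx : x ∈ Iic (0:ℝ)) => fPdf_of_nonpos hx)
    measurableSet_Iic).mpr integrableOn_zero
lemma real_beta {a b : ℝ} (ha : 0 < a) (hb : 0 < b) :
    ∫ t in Ioo (0:ℝ) 1, t ^ (a - 1) * (1 - t) ^ (b - 1)
      = Real.Gamma a * Real.Gamma b / Real.Gamma (a + b) := by
  have hC := Complex.Gamma_mul_Gamma_eq_betaIntegral
    (s := (a:ℂ)) (t := (b:ℂ)) (by simpa using ha) (by simpa using hb)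
  have hbeta : Complex.betaIntegral (a:ℂ) (b:ℂ)
      = ((∫ t in Ioo (0:ℝ) 1, t ^ (a - 1) * (1 - t) ^ (b - 1) : ℝ) : ℂ) := by
    rw [Complex.betaIntegral, intervalIntegral.integral_of_le zero_le_one,
      MeasureTheory.integral_Ioc_eq_integral_Ioo]
    have hcong : ∀ x ∈ Ioo (0:ℝ) 1,
        (x:ℂ) ^ ((a:ℂ) - 1) * ((1:ℂ) - (x:ℂ)) ^ ((b:ℂ) - 1)
          = ((x ^ (a - 1) * (1 - x) ^ (b - 1) : ℝ) : ℂ) := by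
      intro x hx
      have hx0 : (0:ℝ) ≤ x := hx.1.le
      have hx1 : (0:ℝ) ≤ 1 - x := by linarith [hx.2]
      rw [show ((a:ℂ) - 1) = ((a - 1 : ℝ) : ℂ) by push_cast; ring,
        show ((b:ℂ) - 1) = ((b - 1 : ℝ) : ℂ) by push_cast; ring,
        show ((1:ℂ) - (x:ℂ)) = ((1 - x : ℝ) : ℂ) by push_cast; ring,
        ← Complex.ofReal_cpow hx0, ← Complex.ofReal_cpow hx1, ← Complex.ofReal_mul]
    rw [setIntegral_congr_fun measurableSet_Ioo hcong]
    exact integral_ofReal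
  rw [hbeta, ← Complex.ofReal_add, Complex.Gamma_ofReal, Complex.Gamma_ofReal,
    Complex.Gamma_ofReal, ← Complex.ofReal_mul, ← Complex.ofReal_mul] at hC
  have h := Complex.ofReal_inj.mp hC
  have hG : Real.Gamma (a + b) ≠ 0 := (Real.Gamma_pos_of_pos (by linarith)).ne'
  field_simp [h]
  rw [h]; ring

lemma integral_Ioi_fPdf {l : ℝ} (hl : 0 < l) : ∫ x in Ioi (0:ℝ), fPdf l x = 1 := by
  -- change of variables x = l * t / (1 - t)
  set g : ℝ → ℝ := fun t => l * t / (1 - t) with hg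
  have himg : g '' Ioo 0 1 = Ioi (0:ℝ) := by
    ext y; constructor
    · rintro ⟨t, ht, rfl⟩
      have h1 : 0 < 1 - t := by linarith [ht.2]
      exact div_pos (mul_pos hl ht.1) h1
    · intro hy
      have hy0 : (0:ℝ) < y := hy
      refine ⟨y / (y + l), ⟨by positivity, ?_⟩, ?_⟩
      · rw [div_lt_one (by positivity)]; linarith
      · have h1 : y + l ≠ 0 := by positivity
        rw [hg]; field_simp
        rw [show y + l - y = l by ring]; exact div_self hl.ne'
  have hderiv : ∀ t ∈ Ioo (0:ℝ) 1,
      HasDerivWithinAt g (l / (1 - t) ^ 2) (Ioo (0:ℝ) 1) t := by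
    intro t ht
    have h1 : (1:ℝ) - t ≠ 0 := by have := ht.2; intro h; linarith [h]
    have hd : HasDerivAt g (l / (1 - t) ^ 2) t := by
      have h2 : HasDerivAt (fun t : ℝ => l * t) l t := by
        simpa using (hasDerivAt_id t).const_mul l
      have h3 : HasDerivAt (fun t : ℝ => 1 - t) (-1) t := by
        simpa using ((hasDerivAt_id t).const_sub 1)
      have := h2.div h3 h1
      rw [show (l * (1 - t) - l * t * -1) / (1 - t) ^ 2 = l / (1 - t) ^ 2 by ring] at this
      exact this
    exact hd.hasDerivWithinAt
  have hinj : InjOn g (Ioo (0:ℝ) 1) := by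
    intro t1 h1 t2 h2 heq
    have e1 : (1:ℝ) - t1 ≠ 0 := by have := h1.2; intro h; linarith [h]
    have e2 : (1:ℝ) - t2 ≠ 0 := by have := h2.2; intro h; linarith [h]
    rw [hg] at heq
    simp only at heq
    have e1' : (1:ℝ) - t1 ≠ 0 := by have := h1.2; intro h; linarith [h]
    have e2' : (1:ℝ) - t2 ≠ 0 := by have := h2.2; intro h; linarith [h]
    rw [div_eq_div_iff e1' e2'] at heq
    have hz : l * (t1 - t2) = 0 := by linear_combination heq
    have := mul_eq_zero.mp hz
    rcases this with h | h
    · exact absurd h hl.ne'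
    · linarith [h]
  have hcv := integral_image_eq_integral_abs_deriv_smul measurableSet_Ioo hderiv hinj (fPdf l)
  rw [himg] at hcv
  rw [hcv]
  have hpt : ∀ t ∈ Ioo (0:ℝ) 1,
      |l / (1 - t) ^ 2| • fPdf l (g t)
        = (cF l * l ^ ((1:ℝ)/2)) * (t ^ ((1:ℝ)/2 - 1) * (1 - t) ^ (l/2 - 1)) := by
    intro t ht
    have ht0 : 0 < t := ht.1
    have hs0 : 0 < 1 - t := by linarith [ht.2]
    have hx0 : 0 < g t := div_pos (mul_pos hl ht0) hs0
    rw [smul_eq_mul, abs_of_pos (div_pos hl (by positivity)), fPdf_eq hx0]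
    have hxl : g t / l = t / (1 - t) := by rw [hg]; field_simp
    have h1a : 1 + g t / l = 1 / (1 - t) := by
      rw [hxl]
      have : (1:ℝ) - t ≠ 0 := hs0.ne'
      field_simp
      ring
    have h1b : (1 + g t / l) ^ (-((1 + l) / 2)) = (1 - t) ^ ((1 + l) / 2) := by
      rw [h1a, one_div, Real.inv_rpow hs0.le, Real.rpow_neg hs0.le, inv_inv]
    have h2 : g t ^ (-(1/2 : ℝ))
        = l ^ (-(1/2:ℝ)) * t ^ (-(1/2:ℝ)) * (1 - t) ^ ((1/2:ℝ)) := by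
      rw [hg, Real.div_rpow (by positivity) hs0.le, Real.mul_rpow hl.le ht0.le,
        div_eq_mul_inv, Real.rpow_neg hs0.le, inv_inv]
    rw [h1b, h2]
    have m2 : ((1 - t) ^ (2:ℕ) : ℝ)⁻¹ = (1 - t) ^ ((-2:ℝ)) := by
      rw [Real.rpow_neg hs0.le, show ((2:ℝ)) = ((2:ℕ):ℝ) by norm_num, Real.rpow_natCast]
    have m3 : (1 - t) ^ ((1/2:ℝ)) * (1 - t) ^ (((1 + l)/2:ℝ)) * (1 - t) ^ ((-2:ℝ))
        = (1 - t) ^ (l/2 - 1) := by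
      rw [← Real.rpow_add hs0, ← Real.rpow_add hs0]
      congr 1; ring
    have e3 : l * l ^ (-(1/2:ℝ)) = l ^ ((1:ℝ)/2) := by
      nth_rewrite 1 [← Real.rpow_one l]
      rw [← Real.rpow_add hl]; norm_num
    have e5 : t ^ (-(1/2:ℝ)) = t ^ ((1:ℝ)/2 - 1) := by norm_num
    calc l / (1 - t) ^ 2
          * (cF l * (l ^ (-(1/2:ℝ)) * t ^ (-(1/2:ℝ)) * (1 - t) ^ ((1/2:ℝ))
            * (1 - t) ^ (((1 + l)/2:ℝ))))
        = cF l * (l * l ^ (-(1/2:ℝ))) * t ^ (-(1/2:ℝ))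
            * ((1 - t) ^ ((1/2:ℝ)) * (1 - t) ^ (((1 + l)/2:ℝ)) * ((1 - t) ^ (2:ℕ) : ℝ)⁻¹) := by
          rw [div_eq_mul_inv]; ring
      _ = cF l * l ^ ((1:ℝ)/2) * (t ^ ((1:ℝ)/2 - 1) * (1 - t) ^ (l/2 - 1)) := by
          rw [m2, m3, e3, e5]; ring
  rw [setIntegral_congr_fun measurableSet_Ioo hpt, MeasureTheory.integral_const_mul]
  have hbeta := real_beta (a := 1/2) (b := l/2) (by norm_num) (by linarith)
  rw [hbeta]
  have hc : cF l * l ^ ((1:ℝ)/2)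
      = Real.Gamma ((1 + l) / 2) / (Real.Gamma (1 / 2) * Real.Gamma (l / 2)) := by
    unfold cF
    rw [show (1:ℝ)/l = l⁻¹ from one_div l, Real.inv_rpow hl.le, mul_assoc,
      inv_mul_cancel₀ (by positivity), mul_one]
  rw [hc, show (1:ℝ)/2 + l/2 = (1 + l)/2 by ring]
  have hG1 : 0 < Real.Gamma ((1 + l) / 2) := Real.Gamma_pos_of_pos (by linarith)
  have hG2 : 0 < Real.Gamma (1 / 2 : ℝ) := Real.Gamma_pos_of_pos (by norm_num)
  have hG3 : 0 < Real.Gamma (l / 2) := Real.Gamma_pos_of_pos (by linarith)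
  field_simp

lemma integral_fPdf {l : ℝ} (hl : 0 < l) : ∫ x, fPdf l x = 1 := by
  have h := integral_add_compl (measurableSet_Iic (a := (0:ℝ))) (integrable_fPdf hl)
  rw [compl_Iic] at h
  have h0 : ∫ u in Iic (0:ℝ), fPdf l u = 0 := by
    rw [setIntegral_congr_fun measurableSet_Iic
      (fun x (hx : x ∈ Iic (0:ℝ)) => fPdf_of_nonpos hx)]
    exact integral_zero _ _
  rw [← h, h0, integral_Ioi_fPdf hl]
  norm_num
section CDF

variable {f F : ℝ → ℝ}

lemma cdf_of_nonpos (hF : ∀ x, F x = ∫ u in Iic x, f u) (h0 : ∀ x, x ≤ 0 → f x = 0)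
    {x : ℝ} (hx : x ≤ 0) : F x = 0 := by
  rw [hF x, setIntegral_congr_fun measurableSet_Iic
    (fun u (hu : u ∈ Iic x) => h0 u (le_trans hu hx))]
  exact integral_zero _ _

lemma cdf_mono (hF : ∀ x, F x = ∫ u in Iic x, f u) (hnn : ∀ x, 0 ≤ f x)
    (hint : Integrable f) : Monotone F := by
  intro a b hab
  rw [hF a, hF b]
  exact setIntegral_mono_set hint.integrableOn (ae_of_all _ hnn)
    (HasSubset.Subset.eventuallyLE (Iic_subset_Iic.mpr hab))

lemma cdf_eq_add_interval (hF : ∀ x, F x = ∫ u in Iic x, f u)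
    (hint : Integrable f) (x : ℝ) : F x = F 0 + ∫ u in (0:ℝ)..x, f u := by
  rw [hF x, hF 0, ← intervalIntegral.integral_Iic_sub_Iic hint.integrableOn hint.integrableOn]
  ring

lemma cdf_continuous (hF : ∀ x, F x = ∫ u in Iic x, f u)
    (hint : Integrable f) : Continuous F := by
  have : F = fun x => F 0 + ∫ u in (0:ℝ)..x, f u := funext (cdf_eq_add_interval hF hint)
  rw [this]
  exact continuous_const.add
    (intervalIntegral.continuous_primitive (fun a b => hint.intervalIntegrable) 0)

lemma cdf_strict (hF : ∀ x, F x = ∫ u in Iic x, f u) (hnn : ∀ x, 0 ≤ f x)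
    (hpos : ∀ x, 0 < x → 0 < f x) (hm : Measurable f)
    (hint : Integrable f) {a b : ℝ} (ha : 0 ≤ a) (hab : a < b) : F a < F b := by
  have key : F b - F a = ∫ u in Ioc a b, f u := by
    rw [hF a, hF b, intervalIntegral.integral_Iic_sub_Iic hint.integrableOn hint.integrableOn,
      intervalIntegral.integral_of_le hab.le]
  have hpos' : 0 < ∫ u in Ioc a b, f u := by
    rw [setIntegral_pos_iff_support_of_nonneg_ae (ae_of_all _ hnn) hint.integrableOn]
    have hsub : Ioc a b ⊆ Function.support f ∩ Ioc a b := by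
      intro u hu
      exact ⟨(hpos u (lt_of_le_of_lt ha hu.1)).ne', hu⟩
    calc (0:ENNReal) < volume (Ioc a b) := by
          rw [Real.volume_Ioc]; simp [hab]
      _ ≤ volume (Function.support f ∩ Ioc a b) := measure_mono hsub
  linarith [key, hpos']

lemma cdf_pos (hF : ∀ x, F x = ∫ u in Iic x, f u) (h0 : ∀ x, x ≤ 0 → f x = 0)
    (hnn : ∀ x, 0 ≤ f x) (hpos : ∀ x, 0 < x → 0 < f x) (hm : Measurable f)
    (hint : Integrable f) {x : ℝ} (hx : 0 < x) : 0 < F x := by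
  have := cdf_strict hF hnn hpos hm hint le_rfl hx
  rwa [cdf_of_nonpos hF h0 le_rfl] at this

lemma cdf_tendsto (hF : ∀ x, F x = ∫ u in Iic x, f u)
    (hint : Integrable f) : Tendsto F atTop (nhds (∫ u, f u)) := by
  have h1 : Tendsto (fun x : ℝ => ∫ u in (0:ℝ)..x, f u) atTop
      (nhds (∫ u in Ioi (0:ℝ), f u)) :=
    intervalIntegral_tendsto_integral_Ioi 0 hint.integrableOn tendsto_id
  have h2 : F 0 + ∫ u in Ioi (0:ℝ), f u = ∫ u, f u := by
    rw [hF 0, ← compl_Iic]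
    exact integral_add_compl measurableSet_Iic hint
  have h3 : Tendsto (fun x => F 0 + ∫ u in (0:ℝ)..x, f u) atTop
      (nhds (F 0 + ∫ u in Ioi (0:ℝ), f u)) := tendsto_const_nhds.add h1
  rw [h2] at h3
  exact h3.congr (fun x => (cdf_eq_add_interval hF hint x).symm)

lemma cdf_lt_one (hF : ∀ x, F x = ∫ u in Iic x, f u)
    (hnn : ∀ x, 0 ≤ f x) (hpos : ∀ x, 0 < x → 0 < f x)
    (hint : Integrable f) (htot : ∫ u, f u = 1) (x : ℝ) : F x < 1 := by
  have h2 : F x + ∫ u in Ioi x, f u = 1 := by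
    rw [hF x, ← compl_Iic, ← htot]
    exact integral_add_compl measurableSet_Iic hint
  have h3 : 0 < ∫ u in Ioi x, f u := by
    rw [setIntegral_pos_iff_support_of_nonneg_ae (ae_of_all _ hnn) hint.integrableOn]
    have hsub : Ioi (max x 0 + 1) ⊆ Function.support f ∩ Ioi x := by
      intro u hu
      have hu' : max x 0 + 1 < u := hu
      have h1 : 0 < u := lt_of_le_of_lt (by positivity) hu'
      have h2 : x < u := by
        have := le_max_left x 0
        linarith
      exact ⟨(hpos u h1).ne', h2⟩
    calc (0:ENNReal) < volume (Ioi (max x 0 + 1)) := by simp [Real.volume_Ioi]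
      _ ≤ volume (Function.support f ∩ Ioi x) := measure_mono hsub
  linarith [h2, h3]

/-! quantile lemmas -/

lemma qtl_nonempty (hFt : Tendsto F atTop (nhds 1)) {p : ℝ} (hp1 : p < 1) :
    {x : ℝ | p ≤ F x}.Nonempty := by
  obtain ⟨x, hx⟩ := (hFt.eventually_const_lt hp1).exists
  exact ⟨x, hx.le⟩

lemma qtl_bddBelow (hF0 : ∀ x, x ≤ 0 → F x = 0) {p : ℝ} (hp0 : 0 < p) :
    BddBelow {x : ℝ | p ≤ F x} := by
  refine ⟨0, fun x hx => ?_⟩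
  by_contra h
  push_neg at h
  have hx' : p ≤ F x := hx
  rw [hF0 x h.le] at hx'
  exact absurd hx' (not_le.mpr hp0)

lemma qtl_le_of (hF0 : ∀ x, x ≤ 0 → F x = 0) {p : ℝ} (hp0 : 0 < p)
    {y : ℝ} (hy : p ≤ F y) : qtl F p ≤ y := csInf_le (qtl_bddBelow hF0 hp0) hy

lemma le_qtl_of (hFmono : Monotone F) (hFt : Tendsto F atTop (nhds 1))
    {p : ℝ} (hp1 : p < 1) {t : ℝ} (ht : F t < p) : t ≤ qtl F p := by
  refine le_csInf (qtl_nonempty hFt hp1) (fun x hx => ?_)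
  by_contra h
  push_neg at h
  exact absurd (le_trans hx (hFmono h.le)) (not_le.mpr ht)

lemma qtl_pos (hFc : Continuous F) (hFmono : Monotone F) (hF0 : ∀ x, x ≤ 0 → F x = 0)
    {p : ℝ} (hp0 : 0 < p) (hp1 : p < 1) (hFt : Tendsto F atTop (nhds 1)) :
    0 < qtl F p := by
  have h00 : F 0 = 0 := hF0 0 le_rfl
  have hev : ∀ᶠ x in nhds (0:ℝ), F x < p := by
    refine (hFc.tendsto 0).eventually_lt_const ?_
    rw [h00]; exact hp0
  rw [Metric.eventually_nhds_iff] at hev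
  obtain ⟨ε, hε, hball⟩ := hev
  have hδ : F (ε/2) < p := by
    refine hball ?_
    rw [Real.dist_eq]
    rw [abs_of_pos (by linarith)]
    linarith
  have := le_qtl_of hFmono hFt hp1 hδ
  linarith

lemma cdf_qtl_eq (hFc : Continuous F) (hFmono : Monotone F) (hF0 : ∀ x, x ≤ 0 → F x = 0)
    {p : ℝ} (hp0 : 0 < p) (hp1 : p < 1) (hFt : Tendsto F atTop (nhds 1)) :
    F (qtl F p) = p := by
  have hne := qtl_nonempty hFt (p := p) hp1
  have hbdd := qtl_bddBelow hF0 (p := p) hp0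
  have hclosed : IsClosed {x : ℝ | p ≤ F x} := isClosed_le continuous_const hFc
  have hmem : qtl F p ∈ {x : ℝ | p ≤ F x} := hclosed.csInf_mem hne hbdd
  refine le_antisymm ?_ hmem
  by_contra h
  push_neg at h
  have hev : ∀ᶠ x in nhds (qtl F p), p < F x :=
    (hFc.tendsto (qtl F p)).eventually_const_lt h
  rw [Metric.eventually_nhds_iff] at hev
  obtain ⟨ε, hε, hball⟩ := hev
  have hmem2 : qtl F p - ε/2 ∈ {x : ℝ | p ≤ F x} := by
    refine le_of_lt (hball ?_)
    rw [Real.dist_eq]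
    rw [show qtl F p - ε/2 - qtl F p = -(ε/2) by ring, abs_neg, abs_of_pos (by linarith)]
    linarith
  have h2 : qtl F p ≤ qtl F p - ε/2 := csInf_le hbdd hmem2
  linarith

end CDF
/-! ### G1 and H1 facts -/

lemma G1_def : ∀ x, G1 x = ∫ u in Iic x, chi1Pdf u := fun _ => rfl
lemma H1_def (l : ℝ) : ∀ x, H1 l x = ∫ u in Iic x, fPdf l u := fun _ => rfl

lemma G1_of_nonpos {x : ℝ} (hx : x ≤ 0) : G1 x = 0 :=
  cdf_of_nonpos G1_def (fun _ h => chi1Pdf_of_nonpos h) hx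

lemma G1_mono : Monotone G1 := cdf_mono G1_def chi1Pdf_nonneg integrable_chi1Pdf

lemma G1_cont : Continuous G1 := cdf_continuous G1_def integrable_chi1Pdf

lemma G1_tendsto : Tendsto G1 atTop (nhds 1) := by
  have := cdf_tendsto G1_def integrable_chi1Pdf
  rwa [integral_chi1Pdf] at this

lemma H1_of_nonpos {l x : ℝ} (hx : x ≤ 0) : H1 l x = 0 :=
  cdf_of_nonpos (H1_def l) (fun _ h => fPdf_of_nonpos h) hx

lemma H1_mono {l : ℝ} (hl : 0 < l) : Monotone (H1 l) :=
  cdf_mono (H1_def l) (fPdf_nonneg hl) (integrable_fPdf hl)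

lemma H1_cont {l : ℝ} (hl : 0 < l) : Continuous (H1 l) :=
  cdf_continuous (H1_def l) (integrable_fPdf hl)

lemma H1_tendsto {l : ℝ} (hl : 0 < l) : Tendsto (H1 l) atTop (nhds 1) := by
  have := cdf_tendsto (H1_def l) (integrable_fPdf hl)
  rwa [integral_fPdf hl] at this

lemma H1_pos {l x : ℝ} (hl : 0 < l) (hx : 0 < x) : 0 < H1 l x :=
  cdf_pos (H1_def l) (fun _ h => fPdf_of_nonpos h) (fPdf_nonneg hl)
    (fun _ h => fPdf_pos hl h) (measurable_fPdf l) (integrable_fPdf hl) hx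

lemma H1_lt_one {l : ℝ} (hl : 0 < l) (x : ℝ) : H1 l x < 1 :=
  cdf_lt_one (H1_def l) (fPdf_nonneg hl) (fun _ h => fPdf_pos hl h)
    (integrable_fPdf hl) (integral_fPdf hl) x

/-! ### psi and single crossing -/

noncomputable def psi (l u : ℝ) : ℝ :=
  (1 + l) / 2 * Real.log (1 + u / l) - KK l / 2 * u

lemma psi_slope {l u x : ℝ} (hl : 0 < l) (hu : 0 < u) (hux : u ≤ x) :
    u / x * psi l x ≤ psi l u := by
  have hx : 0 < x := lt_of_lt_of_le hu hux
  have hb0 : (0:ℝ) ≤ u / x := by positivity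
  have hb1 : u / x ≤ 1 := div_le_one_of_le₀ hux hx.le
  have hxarg : (0:ℝ) < 1 + x / l := by positivity
  have hcon := strictConcaveOn_log_Ioi.concaveOn.2 (mem_Ioi.mpr one_pos)
    (mem_Ioi.mpr hxarg) (show (0:ℝ) ≤ 1 - u/x by linarith) hb0 (by ring)
  rw [smul_eq_mul, smul_eq_mul, smul_eq_mul, smul_eq_mul, Real.log_one, mul_zero,
    zero_add] at hcon
  have harg : (1 - u/x) * 1 + u/x * (1 + x/l) = 1 + u/l := by field_simp; ring
  rw [harg] at hcon
  have hcancel : u/x * x = u := by field_simp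
  have h3 : (1+l)/2 * (u/x * Real.log (1 + x/l)) ≤ (1+l)/2 * Real.log (1 + u/l) :=
    mul_le_mul_of_nonneg_left hcon (by linarith)
  have expand : u / x * psi l x
      = (1+l)/2 * (u/x * Real.log (1 + x/l)) - KK l / 2 * (u/x * x) := by
    unfold psi; ring
  rw [hcancel] at expand
  unfold psi at *
  linarith

lemma psi_nonneg_left {l u x : ℝ} (hl : 0 < l) (hu : 0 < u) (hux : u ≤ x)
    (hx : 0 ≤ psi l x) : 0 ≤ psi l u := by
  have h := psi_slope hl hu hux
  have hx0 : 0 < x := lt_of_lt_of_le hu hux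
  have : (0:ℝ) ≤ u / x * psi l x := mul_nonneg (by positivity) hx
  linarith

lemma psi_nonpos_right {l u x : ℝ} (hl : 0 < l) (hx : 0 < x) (hxu : x ≤ u)
    (hneg : psi l x < 0) : psi l u ≤ 0 := by
  have h := psi_slope hl hx hxu
  have hu0 : 0 < u := lt_of_lt_of_le hx hxu
  by_contra hcon
  push_neg at hcon
  have : (0:ℝ) < x / u * psi l u := mul_pos (by positivity) hcon
  linarith

/-! ### density comparison -/

lemma scaled_chi_eq {l u : ℝ} (hl : 0 < l) (hu : 0 < u) :
    KK l * chi1Pdf (KK l * u)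
      = cF l * (u ^ (-(1/2:ℝ)) * Real.exp (-(KK l / 2 * u))) := by
  have hK := KK_pos hl
  rw [chi1Pdf_eq (mul_pos hK hu)]
  have h1 : (KK l * u) ^ (-(1/2:ℝ)) = KK l ^ (-(1/2:ℝ)) * u ^ (-(1/2:ℝ)) :=
    Real.mul_rpow hK.le hu.le ▸ rfl
  rw [Real.mul_rpow hK.le hu.le]
  have h2 : KK l * KK l ^ (-(1/2:ℝ)) = KK l ^ ((1/2:ℝ)) := by
    nth_rewrite 1 [← Real.rpow_one (KK l)]
    rw [← Real.rpow_add hK]; norm_num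
  have h3 : (2 * Real.pi) ^ (-(1/2:ℝ)) * KK l ^ ((1/2:ℝ)) = cF l := by
    rw [KK_eq hl, Real.mul_rpow (by positivity) (sq_nonneg _),
      ← Real.rpow_natCast (cF l) 2, ← Real.rpow_mul (cF_pos hl).le]
    rw [Real.rpow_neg (by positivity)]
    have : ((2:ℕ):ℝ) * (1/2:ℝ) = 1 := by norm_num
    rw [this, Real.rpow_one]
    rw [← mul_assoc, inv_mul_cancel₀ (by positivity), one_mul]
  have h4 : -(1/2 : ℝ) * (KK l * u) = -(KK l / 2 * u) := by ring
  calc KK l * ((2 * Real.pi) ^ (-(1/2:ℝ))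
          * ((KK l) ^ (-(1/2:ℝ)) * u ^ (-(1/2:ℝ)) * Real.exp (-(1/2 * (KK l * u)))))
      = ((2 * Real.pi) ^ (-(1/2:ℝ)) * (KK l * KK l ^ (-(1/2:ℝ))))
          * (u ^ (-(1/2:ℝ)) * Real.exp (-(1/2 * (KK l * u)))) := by ring
    _ = cF l * (u ^ (-(1/2:ℝ)) * Real.exp (-(KK l / 2 * u))) := by
        rw [h2, h3, show (-(1/2 * (KK l * u)) : ℝ) = -(KK l / 2 * u) by ring]

lemma fPdf_le_scaled {l u : ℝ} (hl : 0 < l) (hu : 0 < u) :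
    fPdf l u ≤ KK l * chi1Pdf (KK l * u) ↔ 0 ≤ psi l u := by
  rw [fPdf_eq hu, scaled_chi_eq hl hu]
  have hc : 0 < cF l := cF_pos hl
  have hr : (0:ℝ) < u ^ (-(1/2:ℝ)) := Real.rpow_pos_of_pos hu _
  have harg : (0:ℝ) < 1 + u / l := by positivity
  have hA : (0:ℝ) < (1 + u / l) ^ (-((1 + l) / 2)) := Real.rpow_pos_of_pos harg _
  have hB : (0:ℝ) < Real.exp (-(KK l / 2 * u)) := Real.exp_pos _
  constructor
  · intro h
    have h2 : (1 + u / l) ^ (-((1 + l) / 2)) ≤ Real.exp (-(KK l / 2 * u)) := by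
      refine le_of_mul_le_mul_left ?_ (mul_pos hc hr)
      calc cF l * u ^ (-(1/2:ℝ)) * ((1 + u / l) ^ (-((1 + l) / 2)))
            = cF l * (u ^ (-(1/2:ℝ)) * (1 + u / l) ^ (-((1 + l) / 2))) := by ring
          _ ≤ cF l * (u ^ (-(1/2:ℝ)) * Real.exp (-(KK l / 2 * u))) := h
          _ = cF l * u ^ (-(1/2:ℝ)) * Real.exp (-(KK l / 2 * u)) := by ring
    have h3 := Real.log_le_log (by positivity) h2
    rw [Real.log_rpow harg, Real.log_exp] at h3
    unfold psi
    linarith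
  · intro h
    unfold psi at h
    have h2 : (1 + u / l) ^ (-((1 + l) / 2)) ≤ Real.exp (-(KK l / 2 * u)) := by
      rw [← Real.exp_log hA]
      refine Real.exp_le_exp.mpr ?_
      rw [Real.log_rpow harg]
      linarith
    calc cF l * (u ^ (-(1/2:ℝ)) * (1 + u / l) ^ (-((1 + l) / 2)))
        ≤ cF l * (u ^ (-(1/2:ℝ)) * Real.exp (-(KK l / 2 * u))) := by
          refine mul_le_mul_of_nonneg_left (mul_le_mul_of_nonneg_left h2 hr.le) hc.le
      _ = cF l * (u ^ (-(1/2:ℝ)) * Real.exp (-(KK l / 2 * u))) := rfl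

lemma scaled_le_fPdf {l u : ℝ} (hl : 0 < l) (hu : 0 < u) (hpsi : psi l u ≤ 0) :
    KK l * chi1Pdf (KK l * u) ≤ fPdf l u := by
  rw [fPdf_eq hu, scaled_chi_eq hl hu]
  have hc : 0 < cF l := cF_pos hl
  have hr : (0:ℝ) < u ^ (-(1/2:ℝ)) := Real.rpow_pos_of_pos hu _
  have harg : (0:ℝ) < 1 + u / l := by positivity
  have hA : (0:ℝ) < (1 + u / l) ^ (-((1 + l) / 2)) := Real.rpow_pos_of_pos harg _
  have h2 : Real.exp (-(KK l / 2 * u)) ≤ (1 + u / l) ^ (-((1 + l) / 2)) := by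
    rw [← Real.exp_log hA]
    refine Real.exp_le_exp.mpr ?_
    rw [Real.log_rpow harg]
    unfold psi at hpsi
    linarith
  exact mul_le_mul_of_nonneg_left (mul_le_mul_of_nonneg_left h2 hr.le) hc.le
/-! ### scaled chi density -/

lemma integrable_scaled_chi {l : ℝ} (hl : 0 < l) :
    Integrable (fun u : ℝ => KK l * chi1Pdf (KK l * u)) :=
  (MeasureTheory.Integrable.comp_mul_left' integrable_chi1Pdf
    (KK_pos hl).ne').const_mul _

lemma integral_scaled_chi {l : ℝ} (hl : 0 < l) :
    ∫ u : ℝ, KK l * chi1Pdf (KK l * u) = 1 := by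
  have hK := KK_pos hl
  rw [MeasureTheory.integral_const_mul,
    MeasureTheory.Measure.integral_comp_mul_left chi1Pdf (KK l), integral_chi1Pdf,
    smul_eq_mul, mul_one, abs_of_pos (inv_pos.mpr hK), mul_inv_cancel₀ hK.ne']

lemma scaled_chi_nonneg {l : ℝ} (hl : 0 < l) (u : ℝ) : 0 ≤ KK l * chi1Pdf (KK l * u) :=
  mul_nonneg (KK_pos hl).le (chi1Pdf_nonneg _)

lemma G1_scaled_Iic {l : ℝ} (hl : 0 < l) (x : ℝ) :
    G1 (KK l * x) = ∫ u in Iic x, KK l * chi1Pdf (KK l * u) := by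
  have hK := KK_pos hl
  have hg := integrable_scaled_chi hl
  have h0 : ∫ u in Iic (0:ℝ), KK l * chi1Pdf (KK l * u) = 0 := by
    rw [setIntegral_congr_fun measurableSet_Iic (g := fun _ => (0:ℝ))
      (fun u (hu : u ∈ Iic (0:ℝ)) => by
        rw [chi1Pdf_of_nonpos (mul_nonpos_of_nonneg_of_nonpos hK.le hu), mul_zero])]
    exact integral_zero _ _
  have hrhs := cdf_eq_add_interval (F := fun y => ∫ u in Iic y, KK l * chi1Pdf (KK l * u))
    (fun _ => rfl) hg x
  rw [hrhs, h0, zero_add]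
  have hlhs := cdf_eq_add_interval G1_def integrable_chi1Pdf (KK l * x)
  rw [hlhs, G1_of_nonpos le_rfl, zero_add]
  rw [intervalIntegral.integral_const_mul, intervalIntegral.mul_integral_comp_mul_left,
    mul_zero]

/-! ### Key inequality -/

lemma H1_le_G1_scaled {l : ℝ} (hl : 0 < l) (x : ℝ) : H1 l x ≤ G1 (KK l * x) := by
  have hK := KK_pos hl
  rcases le_or_gt x 0 with hx | hx
  · rw [H1_of_nonpos hx, G1_of_nonpos (mul_nonpos_of_nonneg_of_nonpos hK.le hx)]
  rcases le_or_gt 0 (psi l x) with hpsi | hpsi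
  · -- compare densities on Iic x
    rw [G1_scaled_Iic hl]
    refine setIntegral_mono_on (integrable_fPdf hl).integrableOn
      (integrable_scaled_chi hl).integrableOn measurableSet_Iic (fun u hu => ?_)
    rcases le_or_gt u 0 with hu0 | hu0
    · rw [fPdf_of_nonpos hu0]
      exact scaled_chi_nonneg hl u
    · exact (fPdf_le_scaled hl hu0).mpr (psi_nonneg_left hl hu0 hu hpsi)
  · -- compare tails on Ioi x
    have htail : ∫ u in Ioi x, KK l * chi1Pdf (KK l * u) ≤ ∫ u in Ioi x, fPdf l u := by
      refine setIntegral_mono_on (integrable_scaled_chi hl).integrableOn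
        (integrable_fPdf hl).integrableOn measurableSet_Ioi (fun u hu => ?_)
      have hu' : x < u := hu
      exact scaled_le_fPdf hl (lt_trans hx hu') (psi_nonpos_right hl hx hu'.le hpsi)
  -- totals
    have hH : H1 l x + ∫ u in Ioi x, fPdf l u = 1 := by
      rw [H1_def l x, ← compl_Iic, ← integral_fPdf hl]
      exact integral_add_compl measurableSet_Iic (integrable_fPdf hl)
    have hG : G1 (KK l * x) + ∫ u in Ioi x, KK l * chi1Pdf (KK l * u) = 1 := by
      rw [G1_scaled_Iic hl, ← compl_Iic, ← integral_scaled_chi hl]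
      exact integral_add_compl measurableSet_Iic (integrable_scaled_chi hl)
    linarith
/-! ### near-zero estimates -/

lemma G1_upper {z : ℝ} (hz : 0 ≤ z) :
    G1 z ≤ (2 * Real.pi) ^ (-(1/2:ℝ)) * (2 * z ^ ((1/2:ℝ))) := by
  have h1 : G1 z = ∫ u in (0:ℝ)..z, chi1Pdf u := by
    rw [cdf_eq_add_interval G1_def integrable_chi1Pdf z, G1_of_nonpos le_rfl, zero_add]
  have hint2 : IntervalIntegrable (fun u : ℝ => (2 * Real.pi) ^ (-(1/2:ℝ)) * u ^ (-(1/2:ℝ)))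
      volume 0 z :=
    (intervalIntegral.intervalIntegrable_rpow' (by norm_num)).const_mul _
  have hmono : ∀ u ∈ Icc (0:ℝ) z,
      chi1Pdf u ≤ (2 * Real.pi) ^ (-(1/2:ℝ)) * u ^ (-(1/2:ℝ)) := by
    intro u hu
    rcases eq_or_lt_of_le hu.1 with h | h
    · rw [← h, chi1Pdf_of_nonpos le_rfl]
      positivity
    · rw [chi1Pdf_eq h]
      have he : Real.exp (-(1/2 * u)) ≤ 1 := Real.exp_le_one_iff.mpr (by nlinarith)
      have h2 : (0:ℝ) < u ^ (-(1/2:ℝ)) := Real.rpow_pos_of_pos h _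
      have h3 : (0:ℝ) < (2 * Real.pi) ^ (-(1/2:ℝ)) := Real.rpow_pos_of_pos (by positivity) _
      exact mul_le_mul_of_nonneg_left (mul_le_of_le_one_right h2.le he) h3.le
  have h2 := intervalIntegral.integral_mono_on hz
    (integrable_chi1Pdf.intervalIntegrable) hint2 hmono
  rw [h1]
  refine le_trans h2 ?_
  rw [intervalIntegral.integral_const_mul]
  have h3 : ∫ u in (0:ℝ)..z, u ^ (-(1/2:ℝ)) = 2 * z ^ ((1/2:ℝ)) := by
    rw [integral_rpow (Or.inl (by norm_num))]
    rw [Real.zero_rpow (by norm_num)]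
    norm_num
    ring
  rw [h3]

lemma H1_lower {l y : ℝ} (hl : 0 < l) (hy : 0 < y) :
    cF l * (1 + y / l) ^ (-((1 + l) / 2)) * (2 * y ^ ((1/2:ℝ))) ≤ H1 l y := by
  have h1 : H1 l y = ∫ u in (0:ℝ)..y, fPdf l u := by
    rw [cdf_eq_add_interval (H1_def l) (integrable_fPdf hl) y, H1_of_nonpos le_rfl, zero_add]
  have hint2 : IntervalIntegrable
      (fun u : ℝ => cF l * (1 + y / l) ^ (-((1 + l) / 2)) * u ^ (-(1/2:ℝ))) volume 0 y :=
    (intervalIntegral.intervalIntegrable_rpow' (by norm_num)).const_mul _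
  have hmono : ∀ u ∈ Icc (0:ℝ) y,
      cF l * (1 + y / l) ^ (-((1 + l) / 2)) * u ^ (-(1/2:ℝ)) ≤ fPdf l u := by
    intro u hu
    rcases eq_or_lt_of_le hu.1 with h | h
    · rw [← h, fPdf_of_nonpos le_rfl, Real.zero_rpow (by norm_num), mul_zero]
    · rw [fPdf_eq h]
      have key : (1 + y / l) ^ (-((1 + l) / 2)) ≤ (1 + u / l) ^ (-((1 + l) / 2)) := by
        refine Real.rpow_le_rpow_of_nonpos (by positivity) ?_ (by linarith)
        have : u / l ≤ y / l := by gcongr; exact hu.2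
        linarith
      have h2 : (0:ℝ) ≤ u ^ (-(1/2:ℝ)) := Real.rpow_nonneg h.le _
      calc cF l * (1 + y / l) ^ (-((1 + l) / 2)) * u ^ (-(1/2:ℝ))
          = cF l * (u ^ (-(1/2:ℝ)) * (1 + y / l) ^ (-((1 + l) / 2))) := by ring
        _ ≤ cF l * (u ^ (-(1/2:ℝ)) * (1 + u / l) ^ (-((1 + l) / 2))) :=
            mul_le_mul_of_nonneg_left (mul_le_mul_of_nonneg_left key h2) (cF_pos hl).le
  have h2 := intervalIntegral.integral_mono_on hy.le hint2
    ((integrable_fPdf hl).intervalIntegrable) hmono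
  rw [h1]
  refine le_trans ?_ h2
  rw [intervalIntegral.integral_const_mul]
  have h3 : ∫ u in (0:ℝ)..y, u ^ (-(1/2:ℝ)) = 2 * y ^ ((1/2:ℝ)) := by
    rw [integral_rpow (Or.inl (by norm_num))]
    rw [Real.zero_rpow (by norm_num)]
    norm_num
    ring
  rw [h3]
/-! ### the two bounds and the main theorem -/

lemma ratio_le {l : ℝ} (hl : 0 < l) {γ : ℝ} (hγ : γ ∈ Ioo (0:ℝ) 1) :
    qtl G1 (1 - γ) / qtl (H1 l) (1 - γ) ≤ KK l := by
  set p := 1 - γ with hp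
  have hp0 : 0 < p := by rw [hp]; linarith [hγ.2]
  have hp1 : p < 1 := by rw [hp]; linarith [hγ.1]
  have hH0 : ∀ x : ℝ, x ≤ 0 → H1 l x = 0 := fun x hx => H1_of_nonpos hx
  have hy'0 : 0 < qtl (H1 l) p :=
    qtl_pos (H1_cont hl) (H1_mono hl) hH0 hp0 hp1 (H1_tendsto hl)
  have hH : H1 l (qtl (H1 l) p) = p :=
    cdf_qtl_eq (H1_cont hl) (H1_mono hl) hH0 hp0 hp1 (H1_tendsto hl)
  have hG : p ≤ G1 (KK l * qtl (H1 l) p) :=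
    le_trans (le_of_eq hH.symm) (H1_le_G1_scaled hl _)
  have h2 : qtl G1 p ≤ KK l * qtl (H1 l) p :=
    qtl_le_of (fun x hx => G1_of_nonpos hx) hp0 hG
  exact (div_le_iff₀ hy'0).mpr h2

lemma ratio_ge {l : ℝ} (hl : 0 < l) {c : ℝ} (hc0 : 0 < c) (hcK : c < KK l) :
    ∃ γ, γ ∈ Ioo (0:ℝ) 1 ∧ c ≤ qtl G1 (1 - γ) / qtl (H1 l) (1 - γ) := by
  have hK := KK_pos hl
  have hcF := cF_pos hl
  set a : ℝ := (2 * Real.pi) ^ (-(1/2:ℝ)) * c ^ ((1/2:ℝ)) with ha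
  have ha0 : 0 < a := mul_pos (Real.rpow_pos_of_pos (by positivity) _)
    (Real.rpow_pos_of_pos hc0 _)
  have hacF : a < cF l := by
    have hsq1 : ((2 * Real.pi) ^ (-(1/2:ℝ))) ^ 2 = (2 * Real.pi)⁻¹ := by
      rw [← Real.rpow_natCast ((2 * Real.pi) ^ (-(1/2:ℝ))) 2,
        ← Real.rpow_mul (by positivity),
        show (-(1/2:ℝ)) * ((2:ℕ):ℝ) = -1 by push_cast; ring, Real.rpow_neg_one]
    have hsq2 : (c ^ ((1/2:ℝ))) ^ 2 = c := by
      rw [← Real.rpow_natCast (c ^ ((1/2:ℝ))) 2, ← Real.rpow_mul hc0.le,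
        show ((1/2:ℝ)) * ((2:ℕ):ℝ) = 1 by push_cast; ring, Real.rpow_one]
    have hsq : a ^ 2 < cF l ^ 2 := by
      rw [ha, mul_pow, hsq1, hsq2]
      have h1 : c < 2 * Real.pi * cF l ^ 2 := by rw [← KK_eq hl]; exact hcK
      rw [inv_mul_eq_div, div_lt_iff₀ (by positivity)]
      linarith [h1]
    exact lt_of_pow_lt_pow_left₀ 2 hcF.le hsq
  -- choose y > 0 with a < cF l * (1 + y/l) ^ (-((1+l)/2))
  have hcont : ContinuousAt (fun y : ℝ => cF l * (1 + y / l) ^ (-((1 + l) / 2))) 0 := by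
    refine ContinuousAt.mul continuousAt_const ?_
    have hinner : ContinuousAt (fun y : ℝ => 1 + y / l) 0 :=
      (continuous_const.add (continuous_id.div_const l)).continuousAt
    exact hinner.rpow_const (Or.inl (by norm_num))
  have hval : a < cF l * (1 + (0:ℝ) / l) ^ (-((1 + l) / 2)) := by
    rw [show (1 + (0:ℝ)/l) = 1 by norm_num, Real.one_rpow, mul_one]
    exact hacF
  have hev : ∀ᶠ y in nhds (0:ℝ), a < cF l * (1 + y / l) ^ (-((1 + l) / 2)) :=
    hcont.eventually_const_lt hval
  rw [Metric.eventually_nhds_iff] at hev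
  obtain ⟨ε, hε, hball⟩ := hev
  set y : ℝ := ε / 2 with hy
  have hy0 : 0 < y := by rw [hy]; linarith
  have hay : a < cF l * (1 + y / l) ^ (-((1 + l) / 2)) := by
    refine hball ?_
    rw [Real.dist_eq, sub_zero, abs_of_pos hy0]
    rw [hy]; linarith
  -- core strict inequality : G1 (c * y) < H1 l y
  have hcore : G1 (c * y) < H1 l y := by
    have h1 : G1 (c * y) ≤ (2 * Real.pi) ^ (-(1/2:ℝ)) * (2 * (c * y) ^ ((1/2:ℝ))) :=
      G1_upper (by positivity)
    have h2 : (c * y) ^ ((1/2:ℝ)) = c ^ ((1/2:ℝ)) * y ^ ((1/2:ℝ)) :=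
      Real.mul_rpow hc0.le hy0.le
    have hy12 : (0:ℝ) < y ^ ((1/2:ℝ)) := Real.rpow_pos_of_pos hy0 _
    have h3 : (2 * Real.pi) ^ (-(1/2:ℝ)) * (2 * (c * y) ^ ((1/2:ℝ)))
        = a * (2 * y ^ ((1/2:ℝ))) := by rw [h2, ha]; ring
    have h4 : a * (2 * y ^ ((1/2:ℝ)))
        < (cF l * (1 + y / l) ^ (-((1 + l) / 2))) * (2 * y ^ ((1/2:ℝ))) :=
      mul_lt_mul_of_pos_right hay (by positivity)
    have h5 := H1_lower hl hy0
    calc G1 (c * y) ≤ a * (2 * y ^ ((1/2:ℝ))) := h3 ▸ h1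
      _ < (cF l * (1 + y / l) ^ (-((1 + l) / 2))) * (2 * y ^ ((1/2:ℝ))) := h4
      _ ≤ H1 l y := h5
  set p : ℝ := H1 l y with hpdef
  have hp0 : 0 < p := H1_pos hl hy0
  have hp1 : p < 1 := H1_lt_one hl y
  have hH0 : ∀ x : ℝ, x ≤ 0 → H1 l x = 0 := fun x hx => H1_of_nonpos hx
  refine ⟨1 - p, ⟨by linarith, by linarith⟩, ?_⟩
  rw [show (1:ℝ) - (1 - p) = p by ring]
  have hy'0 : 0 < qtl (H1 l) p :=
    qtl_pos (H1_cont hl) (H1_mono hl) hH0 hp0 hp1 (H1_tendsto hl)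
  have hy'le : qtl (H1 l) p ≤ y := qtl_le_of hH0 hp0 (le_of_eq hpdef)
  have hGlt : G1 (c * qtl (H1 l) p) < p := by
    have : G1 (c * qtl (H1 l) p) ≤ G1 (c * y) :=
      G1_mono (by nlinarith [hy'le, hy'0])
    exact lt_of_le_of_lt this hcore
  have hcq : c * qtl (H1 l) p ≤ qtl G1 p := le_qtl_of G1_mono G1_tendsto hp1 hGlt
  exact (le_div_iff₀ hy'0).mpr hcq


/-- `sup_{γ ∈ (0,1)} G₁⁻¹(1−γ)/H_{1,λ}⁻¹(1−γ) = (2/λ) Γ²((λ+1)/2)/Γ²(λ/2)`. -/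
theorem stmt14 (l : ℝ) (hl : 0 < l) :
    sSup ((fun γ : ℝ => qtl G1 (1 - γ) / qtl (H1 l) (1 - γ)) '' Set.Ioo 0 1)
      = (2 / l) * Real.Gamma ((l + 1) / 2) ^ 2 / Real.Gamma (l / 2) ^ 2 := by
  have hK := KK_pos hl
  set S := (fun γ : ℝ => qtl G1 (1 - γ) / qtl (H1 l) (1 - γ)) '' Set.Ioo 0 1 with hS
  have hub : ∀ v ∈ S, v ≤ KK l := by
    rintro v ⟨γ, hγ, rfl⟩
    exact ratio_le hl hγ
  have hbdd : BddAbove S := ⟨KK l, hub⟩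
  have hne : S.Nonempty := ⟨_, ⟨1/2, by norm_num, rfl⟩⟩
  have hle : sSup S ≤ KK l := csSup_le hne hub
  have hge : KK l ≤ sSup S := by
    refine le_of_forall_lt (fun c hc => ?_)
    have hmc : max c 0 < KK l := max_lt hc hK
    set c' : ℝ := (max c 0 + KK l) / 2 with hc'
    have hc'0 : 0 < c' := by
      have := le_max_right c 0
      rw [hc']
      linarith
    have hc'K : c' < KK l := by rw [hc']; linarith
    have hcc' : c < c' := by
      have := le_max_left c 0
      rw [hc']
      linarith
    obtain ⟨γ, hγ, hv⟩ := ratio_ge hl hc'0 hc'K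
    calc c < c' := hcc'
      _ ≤ qtl G1 (1 - γ) / qtl (H1 l) (1 - γ) := hv
      _ ≤ sSup S := le_csSup hbdd ⟨γ, hγ, rfl⟩
  have hfin : sSup S = KK l := le_antisymm hle hge
  rw [hfin]
  unfold KK
  ring
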